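/- If sum_{i=1}^s d_i/(1+exp(-(x-μ_i)/σ_i)) = 0 for all x with all σ_i equal to a common σ > 0 and μ_1,...,μ_s pairwise distinct, then after multiplying by (1+exp((x-μ_1)/σ)) and differentiating in x, one obtains sum_{i=2}^s d_i [exp(-μ_1/σ) - exp(-μ_i/σ)]·(1+exp((x-μ_i)/σ))^{-2} = 0 for all x; iterating this procedure yields d_s = 0. -/

import Mathlib

open Polynomial Finset

theorem logistic_elimination_step
    (s : ℕ) (d μ : Fin (s + 1) → ℝ) (σ : ℝ)
    (hσ : 0 < σ)
    (hμ : Function.Injective μ)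
    (h : ∀ x : ℝ, ∑ i, d i / (1 + Real.exp (-(x - μ i) / σ)) = 0) :
    (∀ x : ℝ, ∑ i ∈ Finset.univ.erase 0,
        d i * (Real.exp (-μ 0 / σ) - Real.exp (-μ i / σ)) *
          ((1 + Real.exp ((x - μ i) / σ)) ^ 2)⁻¹ = 0) ∧
    d (Fin.last s) = 0 := by
  set a : Fin (s+1) → ℝ := fun i => Real.exp (μ i / σ) with ha
  have hapos : ∀ i, 0 < a i := fun i => Real.exp_pos _
  have hainj : Function.Injective a := by
    intro i j hij
    apply hμ
    have h1 : μ i / σ = μ j / σ := Real.exp_injective hij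
    field_simp [hσ.ne'] at h1
    exact h1
  -- key : for all t > 0, ∑ d i * (t / (t + a i)) = 0
  have key : ∀ t : ℝ, 0 < t → ∑ i, d i * (t / (t + a i)) = 0 := by
    intro t ht
    have hx := h (σ * Real.log t)
    have heq : ∀ i : Fin (s+1),
        d i / (1 + Real.exp (-(σ * Real.log t - μ i) / σ)) = d i * (t / (t + a i)) := by
      intro i
      have h1 : (-(σ * Real.log t - μ i) / σ) = μ i / σ - Real.log t := by
        field_simp
        ring
      have h2 : Real.exp (-(σ * Real.log t - μ i) / σ) = a i / t := by
        rw [h1, Real.exp_sub, Real.exp_log ht]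
      rw [h2]
      have hti : t + a i ≠ 0 := by positivity
      field_simp
    rw [Finset.sum_congr rfl (fun i _ => heq i)] at hx
    exact hx
  -- polynomial
  set P : Polynomial ℝ :=
    ∑ i, Polynomial.C (d i) * (Polynomial.X * ∏ j ∈ Finset.univ.erase i, (Polynomial.X + Polynomial.C (a j))) with hP
  have hPeval : ∀ t : ℝ, P.eval t =
      ∑ i, d i * (t * ∏ j ∈ Finset.univ.erase i, (t + a j)) := by
    intro t
    simp [hP, Polynomial.eval_finset_sum, Polynomial.eval_prod]
  have hProot : ∀ t : ℝ, 0 < t → P.eval t = 0 := by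
    intro t ht
    rw [hPeval]
    have hmul := congrArg (· * ∏ j, (t + a j)) (key t ht)
    simp only [Finset.sum_mul, zero_mul] at hmul
    rw [← hmul]
    apply Finset.sum_congr rfl
    intro i _
    have hti : t + a i ≠ 0 := by positivity
    rw [← Finset.mul_prod_erase Finset.univ (fun j => t + a j) (Finset.mem_univ i)]
    field_simp
  have hP0 : P = 0 := by
    apply Polynomial.eq_zero_of_infinite_isRoot
    apply Set.Infinite.mono (s := Set.Ioi (0:ℝ))
    · intro t ht
      exact hProot t ht
    · exact Set.Ioi_infinite 0
  have dk : ∀ k, d k = 0 := by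
    intro k
    have he : P.eval (-(a k)) = 0 := by rw [hP0]; simp
    rw [hPeval] at he
    have hz : ∀ i ∈ Finset.univ, i ≠ k →
        d i * (-(a k) * ∏ j ∈ Finset.univ.erase i, (-(a k) + a j)) = 0 := by
      intro i _ hik
      have hk : k ∈ Finset.univ.erase i := Finset.mem_erase.2 ⟨fun hh => hik hh.symm, Finset.mem_univ k⟩
      rw [Finset.prod_eq_zero hk (by ring)]
      ring
    rw [Finset.sum_eq_single k hz (by simp)] at he
    have hne : (-(a k) * ∏ j ∈ Finset.univ.erase k, (-(a k) + a j)) ≠ 0 := by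
      apply mul_ne_zero
      · exact neg_ne_zero.2 (hapos k).ne'
      · rw [Finset.prod_ne_zero_iff]
        intro j hj
        have hjk : j ≠ k := (Finset.mem_erase.1 hj).1
        intro hzero
        apply hjk
        apply hainj
        linarith
    exact (mul_eq_zero.1 he).resolve_right hne
  constructor
  · intro x
    apply Finset.sum_eq_zero
    intro i _
    rw [dk i]
    ring
  · exact dk _
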